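/- Let S be a finite state space, P_θ a stochastic matrix depending differentiably on a real parameter θ, π_θ its stationary distribution (depending differentiably on θ), f_θ : S → ℝ a differentiable cost function, C(θ) = Σ_s π_θ(s)·f_θ(s) the average cost, and d_θ : S → ℝ a solution of the Bellman equation d_θ(s) = f_θ(s) - C(θ) + Σ_{s'} P_θ(s'|s)·d_θ(s'). Then the policy-gradient formula holds: C'(θ) = Σ_s π_θ(s)·( f_θ'(s) + Σ_{s'} (∂P_θ(s'|s)/∂θ)·d_θ(s') ). -/

import Mathlib

theorem policy_gradient_formula
    {S : Type*} [Fintype S] [Nonempty S]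
    (π π' : ℝ → S → ℝ) (P P' : ℝ → S → S → ℝ) (f f' : ℝ → S → ℝ)
    (d : ℝ → S → ℝ)
    (hπ : ∀ s θ, HasDerivAt (fun ϑ => π ϑ s) (π' θ s) θ)
    (hP : ∀ s s' θ, HasDerivAt (fun ϑ => P ϑ s s') (P' θ s s') θ)
    (hf : ∀ s θ, HasDerivAt (fun ϑ => f ϑ s) (f' θ s) θ)
    (hd : ∀ s, Differentiable ℝ (fun ϑ => d ϑ s))
    (hstoch : ∀ θ s, ∑ s' : S, P θ s s' = 1)
    (hbalance : ∀ θ s', ∑ s : S, π θ s * P θ s s' = π θ s')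
    (hπsum : ∀ θ, ∑ s : S, π θ s = 1)
    (hBellman : ∀ θ s,
      d θ s = f θ s - (∑ s' : S, π θ s' * f θ s') + ∑ s' : S, P θ s s' * d θ s')
    (θ : ℝ) :
    HasDerivAt (fun ϑ => ∑ s : S, π ϑ s * f ϑ s)
      (∑ s : S, π θ s * (f' θ s + ∑ s' : S, P' θ s s' * d θ s')) θ := by
  -- derivative of the normalization: ∑ π' = 0
  have hsum0 : (∑ s : S, π' θ s) = 0 := by
    have h : HasDerivAt (fun ϑ => ∑ s : S, π ϑ s) (∑ s : S, π' θ s) θ :=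
      HasDerivAt.fun_sum fun s _ => hπ s θ
    have h1 : HasDerivAt (fun _ : ℝ => (1 : ℝ)) (∑ s : S, π' θ s) θ := by
      have : (fun ϑ => ∑ s : S, π ϑ s) = fun _ : ℝ => (1 : ℝ) := funext fun ϑ => hπsum ϑ
      rwa [this] at h
    exact h1.unique (hasDerivAt_const θ 1)
  -- derivative of the balance equations
  have hbal : ∀ s' : S,
      (∑ s : S, (π' θ s * P θ s s' + π θ s * P' θ s s')) = π' θ s' := by
    intro s'
    have h : HasDerivAt (fun ϑ => ∑ s : S, π ϑ s * P ϑ s s')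
        (∑ s : S, (π' θ s * P θ s s' + π θ s * P' θ s s')) θ :=
      HasDerivAt.fun_sum fun s _ => (hπ s θ).mul (hP s s' θ)
    have heq : (fun ϑ => ∑ s : S, π ϑ s * P ϑ s s') = fun ϑ => π ϑ s' :=
      funext fun ϑ => hbalance ϑ s'
    rw [heq] at h
    exact h.unique (hπ s' θ)
  have hbal' : ∀ s' : S,
      (∑ s : S, π' θ s * P θ s s') = π' θ s' - ∑ s : S, π θ s * P' θ s s' := by
    intro s'
    have := hbal s'
    rw [Finset.sum_add_distrib] at this
    linarith
  -- the key identity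
  have key : (∑ s : S, π' θ s * f θ s)
      = ∑ s : S, π θ s * ∑ s' : S, P' θ s s' * d θ s' := by
    have hf_eq : ∀ s : S, f θ s
        = d θ s + (∑ s' : S, π θ s' * f θ s') - ∑ s' : S, P θ s s' * d θ s' := by
      intro s; have := hBellman θ s; linarith
    calc (∑ s : S, π' θ s * f θ s)
        = ∑ s : S, (π' θ s * d θ s + π' θ s * (∑ s' : S, π θ s' * f θ s')
            - ∑ s' : S, π' θ s * (P θ s s' * d θ s')) := by
          refine Finset.sum_congr rfl fun s _ => ?_
          rw [hf_eq s, mul_sub, mul_add, Finset.mul_sum, Finset.mul_sum]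
      _ = (∑ s : S, π' θ s * d θ s)
            + (∑ s : S, π' θ s * (∑ s' : S, π θ s' * f θ s'))
            - ∑ s : S, ∑ s' : S, π' θ s * (P θ s s' * d θ s') := by
          rw [Finset.sum_sub_distrib, Finset.sum_add_distrib]
      _ = (∑ s : S, π' θ s * d θ s) + 0
            - ∑ s' : S, (∑ s : S, π' θ s * P θ s s') * d θ s' := by
          rw [← Finset.sum_mul, hsum0, zero_mul, Finset.sum_comm]
          congr 1
          refine Finset.sum_congr rfl fun s' _ => ?_
          rw [Finset.sum_mul]
          exact Finset.sum_congr rfl fun s _ => by ring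
      _ = (∑ s : S, π' θ s * d θ s)
            - ∑ s' : S, (π' θ s' * d θ s'
                - (∑ s : S, π θ s * P' θ s s') * d θ s') := by
          rw [add_zero]
          congr 1
          refine Finset.sum_congr rfl fun s' _ => ?_
          rw [hbal' s', sub_mul]
      _ = ∑ s' : S, (∑ s : S, π θ s * P' θ s s') * d θ s' := by
          rw [Finset.sum_sub_distrib]; ring
      _ = ∑ s' : S, ∑ s : S, π θ s * (P' θ s s' * d θ s') := by
          refine Finset.sum_congr rfl fun s' _ => ?_
          rw [Finset.sum_mul]
          exact Finset.sum_congr rfl fun s _ => by ring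
      _ = ∑ s : S, ∑ s' : S, π θ s * (P' θ s s' * d θ s') := Finset.sum_comm
      _ = ∑ s : S, π θ s * ∑ s' : S, P' θ s s' * d θ s' := by
          exact Finset.sum_congr rfl fun s _ => (Finset.mul_sum _ _ _).symm
  -- conclude
  have h : HasDerivAt (fun ϑ => ∑ s : S, π ϑ s * f ϑ s)
      (∑ s : S, (π' θ s * f θ s + π θ s * f' θ s)) θ :=
    HasDerivAt.fun_sum fun s _ => (hπ s θ).mul (hf s θ)
  have hval : (∑ s : S, (π' θ s * f θ s + π θ s * f' θ s))
      = ∑ s : S, π θ s * (f' θ s + ∑ s' : S, P' θ s s' * d θ s') := by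
    rw [Finset.sum_add_distrib, key]
    rw [show (∑ s : S, π θ s * (f' θ s + ∑ s' : S, P' θ s s' * d θ s'))
        = ∑ s : S, (π θ s * ∑ s' : S, P' θ s s' * d θ s' + π θ s * f' θ s) from
      Finset.sum_congr rfl fun s _ => by ring, Finset.sum_add_distrib]
  rwa [hval] at h
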